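/- Let r ∈ ℝ, let ν be a probability measure on ℝ supported in [r − 1/2, r + 1/2], and let f(x) = ∫ g_μ(x) dν(μ). Then for every j ∈ ℕ, the Hermite coefficient α_j = ∫_ℝ f(x) ψ_j(x − r) dx satisfies |α_j| ≤ (1/√(j!)) · (2√2)^{−j}. -/

import Mathlib

open MeasureTheory Real Polynomial Filter

lemma integrable_pow_mul_gauss {b : ℝ} (hb : 0 < b) (n : ℕ) :
    Integrable fun x : ℝ => x ^ n * Real.exp (-b * x ^ 2) := by
  have h := integrable_rpow_mul_exp_neg_mul_sq hb (s := (n : ℝ)) (by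
    have : (0:ℝ) ≤ n := Nat.cast_nonneg n; linarith)
  simpa [Real.rpow_natCast] using h

lemma integrable_poly_mul_gauss {b : ℝ} (hb : 0 < b) (p : ℝ[X]) :
    Integrable fun x : ℝ => Polynomial.aeval x p * Real.exp (-b * x ^ 2) := by
  induction p using Polynomial.induction_on' with
  | add p q hp hq => simp only [map_add, add_mul]; exact hp.add hq
  | monomial n a =>
      simpa [Polynomial.aeval_monomial, mul_assoc] using
        (integrable_pow_mul_gauss hb n).const_mul a

lemma integrable_poly_mul_gauss' {b : ℝ} (hb : 0 < b) (p : ℝ[X]) (c d : ℝ) :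
    Integrable fun x : ℝ => Polynomial.aeval x p * Real.exp (-b * x ^ 2 + c * x + d) := by
  have key : ∀ x : ℝ, Polynomial.aeval x p * Real.exp (-b * x ^ 2 + c * x + d)
      = (Polynomial.aeval (x - c / (2 * b)) (p.comp (X + C (c / (2 * b))))
          * Real.exp (-b * (x - c / (2 * b)) ^ 2))
        * Real.exp (c ^ 2 / (4 * b) + d) := by
    intro x
    rw [Polynomial.aeval_comp]
    simp only [map_add, Polynomial.aeval_X, Polynomial.aeval_C, sub_add_cancel]
    rw [mul_assoc, ← Real.exp_add]
    have hb' : b ≠ 0 := ne_of_gt hb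
    have harg : -b * (x - c / (2 * b)) ^ 2 + (c ^ 2 / (4 * b) + d)
        = -b * x ^ 2 + c * x + d := by
      field_simp
      ring
    rw [harg]
    simp
  simp only [key]
  exact ((integrable_poly_mul_gauss hb _).comp_sub_right (c / (2 * b))).mul_const _

lemma contDiff_g0 : ContDiff ℝ ⊤ (fun y : ℝ => Real.exp (-(y ^ 2 / 2))) :=
  (((contDiff_id (𝕜 := ℝ)).pow 2).div_const 2).neg.exp

lemma deriv_iter_g0 (k : ℕ) :
    deriv^[k] (fun y : ℝ => Real.exp (-(y ^ 2 / 2)))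
      = fun y => (-1 : ℝ) ^ k * Polynomial.aeval y (Polynomial.hermite k)
          * Real.exp (-(y ^ 2 / 2)) :=
  funext fun y => Polynomial.deriv_gaussian_eq_hermite_mul_gaussian k y

lemma hasDerivAt_iter_g0 (k : ℕ) (y : ℝ) :
    HasDerivAt (deriv^[k] (fun y : ℝ => Real.exp (-(y ^ 2 / 2))))
      (deriv^[k + 1] (fun y : ℝ => Real.exp (-(y ^ 2 / 2))) y) y := by
  have h1 : Differentiable ℝ (iteratedDeriv k (fun y : ℝ => Real.exp (-(y ^ 2 / 2)))) :=
    contDiff_g0.differentiable_iteratedDeriv k (by exact_mod_cast WithTop.coe_lt_top _)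
  rw [iteratedDeriv_eq_iterate] at h1
  have h2 := (h1 y).hasDerivAt
  rwa [← Function.iterate_succ_apply' deriv k] at h2

lemma integrable_hermite_exp (k : ℕ) (b : ℝ) :
    Integrable fun y : ℝ => Polynomial.aeval y (Polynomial.hermite k)
      * Real.exp (-(y ^ 2 / 2)) * Real.exp (b * y) := by
  have h := integrable_poly_mul_gauss' (b := (1/2 : ℝ)) (by norm_num)
    ((Polynomial.hermite k).map (algebraMap ℤ ℝ)) b 0
  refine h.congr (Filter.Eventually.of_forall fun y => ?_)
  simp only [Polynomial.aeval_map_algebraMap, mul_assoc, ← Real.exp_add]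
  ring_nf

lemma L_lemma (b : ℝ) : ∀ k : ℕ,
    ∫ y : ℝ, deriv^[k] (fun y : ℝ => Real.exp (-(y ^ 2 / 2))) y * Real.exp (b * y)
      = (-b) ^ k * (Real.sqrt (2 * π) * Real.exp (b ^ 2 / 2)) := by
  intro k
  induction k with
  | zero =>
      simp only [Function.iterate_zero_apply, pow_zero, one_mul]
      have h1 : ∀ y : ℝ, Real.exp (-(y ^ 2 / 2)) * Real.exp (b * y)
          = Real.exp (b ^ 2 / 2) * Real.exp (-(1/2 : ℝ) * (y - b) ^ 2) := by
        intro y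
        rw [← Real.exp_add, ← Real.exp_add]
        ring_nf
      simp only [h1]
      rw [MeasureTheory.integral_const_mul]
      have h2 : ∫ y : ℝ, Real.exp (-(1/2 : ℝ) * (y - b) ^ 2)
          = ∫ y : ℝ, Real.exp (-(1/2 : ℝ) * y ^ 2) :=
        integral_sub_right_eq_self (fun y => Real.exp (-(1/2 : ℝ) * y ^ 2)) b
      rw [h2, integral_gaussian]
      rw [show π / (1/2 : ℝ) = 2 * π by ring]
      ring
  | succ k ih =>
      set g0 : ℝ → ℝ := fun y => Real.exp (-(y ^ 2 / 2)) with hg0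
      have hF : Integrable (fun y : ℝ => deriv^[k] g0 y * Real.exp (b * y)) := by
        rw [hg0, deriv_iter_g0 k]
        exact (((integrable_hermite_exp k b).const_mul
          ((-1 : ℝ) ^ k)).congr (Filter.Eventually.of_forall fun y => by ring))
      have hF1 : Integrable (fun y : ℝ => deriv^[k+1] g0 y * Real.exp (b * y)) := by
        rw [hg0, deriv_iter_g0 (k+1)]
        exact (((integrable_hermite_exp (k+1) b).const_mul
          ((-1 : ℝ) ^ (k+1))).congr (Filter.Eventually.of_forall fun y => by ring))
      have hF' : Integrable (fun y : ℝ =>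
          deriv^[k+1] g0 y * Real.exp (b * y)
            + deriv^[k] g0 y * (Real.exp (b * y) * b)) := by
        refine hF1.add ?_
        exact (hF.mul_const b).congr (Filter.Eventually.of_forall fun y => by ring)
      have hderiv : ∀ y : ℝ, HasDerivAt (fun y => deriv^[k] g0 y * Real.exp (b * y))
          (deriv^[k+1] g0 y * Real.exp (b * y)
            + deriv^[k] g0 y * (Real.exp (b * y) * b)) y := by
        intro y
        have h1 := hasDerivAt_iter_g0 k y
        have h2 : HasDerivAt (fun y : ℝ => Real.exp (b * y)) (Real.exp (b * y) * b) y := by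
          simpa using ((hasDerivAt_id y).const_mul b).exp
        exact h1.mul h2
      have hzero := integral_eq_zero_of_hasDerivAt_of_integrable hderiv hF' hF
      rw [integral_add hF1 ((hF.mul_const b).congr
        (Filter.Eventually.of_forall fun y => by ring))] at hzero
      have h3 : (∫ y : ℝ, deriv^[k] g0 y * (Real.exp (b * y) * b))
          = (∫ y : ℝ, deriv^[k] g0 y * Real.exp (b * y)) * b := by
        rw [← MeasureTheory.integral_mul_const]
        congr 1; funext y; ring
      rw [h3, ih] at hzero
      have h4 : (∫ y : ℝ, deriv^[k+1] g0 y * Real.exp (b * y))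
          = -((-b) ^ k * (Real.sqrt (2 * π) * Real.exp (b ^ 2 / 2)) * b) := by
        linarith
      rw [h4]; ring

lemma K_lemma (j : ℕ) (b : ℝ) :
    ∫ y : ℝ, Polynomial.aeval y (Polynomial.hermite j) * Real.exp (-(y - b) ^ 2 / 2)
      = b ^ j * Real.sqrt (2 * π) := by
  have key : ∀ y : ℝ, Polynomial.aeval y (Polynomial.hermite j) * Real.exp (-(y - b) ^ 2 / 2)
      = (-1 : ℝ) ^ j * Real.exp (-(b ^ 2) / 2)
        * (deriv^[j] (fun y : ℝ => Real.exp (-(y ^ 2 / 2))) y * Real.exp (b * y)) := by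
    intro y
    rw [deriv_iter_g0 j]
    have h1 : ((-1 : ℝ) ^ j) * ((-1 : ℝ) ^ j) = 1 := by
      rw [← pow_add]; simp [pow_mul]
    have h2 : Real.exp (-(b ^ 2) / 2) * (Real.exp (-(y ^ 2 / 2)) * Real.exp (b * y))
        = Real.exp (-(y - b) ^ 2 / 2) := by
      rw [← Real.exp_add, ← Real.exp_add]
      ring_nf
    calc Polynomial.aeval y (Polynomial.hermite j) * Real.exp (-(y - b) ^ 2 / 2)
        = Polynomial.aeval y (Polynomial.hermite j)
            * (Real.exp (-(b ^ 2) / 2) * (Real.exp (-(y ^ 2 / 2)) * Real.exp (b * y))) := by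
          rw [h2]
      _ = ((-1 : ℝ) ^ j * ((-1 : ℝ) ^ j)) * Polynomial.aeval y (Polynomial.hermite j)
            * (Real.exp (-(b ^ 2) / 2) * (Real.exp (-(y ^ 2 / 2)) * Real.exp (b * y))) := by
          rw [h1]; ring
      _ = (-1 : ℝ) ^ j * Real.exp (-(b ^ 2) / 2)
            * (((-1 : ℝ) ^ j * Polynomial.aeval y (Polynomial.hermite j)
              * Real.exp (-(y ^ 2 / 2))) * Real.exp (b * y)) := by ring
  simp only [key]
  rw [MeasureTheory.integral_const_mul, L_lemma b j]
  have h5 : (-1 : ℝ) ^ j * (-b) ^ j = b ^ j := by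
    rw [← mul_pow]; norm_num
  have h6 : Real.exp (-(b ^ 2) / 2) * Real.exp (b ^ 2 / 2) = 1 := by
    rw [← Real.exp_add]; simp [neg_div]
  calc (-1 : ℝ) ^ j * Real.exp (-(b ^ 2) / 2)
        * ((-b) ^ j * (Real.sqrt (2 * π) * Real.exp (b ^ 2 / 2)))
      = ((-1 : ℝ) ^ j * (-b) ^ j) * (Real.exp (-(b ^ 2) / 2) * Real.exp (b ^ 2 / 2))
          * Real.sqrt (2 * π) := by ring
    _ = b ^ j * Real.sqrt (2 * π) := by rw [h5, h6, mul_one]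

/-- The unit-variance Gaussian density centered at `μ`. -/
noncomputable def gauss (μ x : ℝ) : ℝ := (Real.sqrt (2 * Real.pi))⁻¹ * Real.exp (-(x - μ)^2 / 2)

/-- The Gaussian mixture density with mixing measure `ν`. -/
noncomputable def mix (ν : Measure ℝ) (x : ℝ) : ℝ := ∫ μ, gauss μ x ∂ν

/-- The physicist's Hermite polynomial `h_j(x) = (−1)^j e^{x²} (d^j/dx^j) e^{−x²}`. -/
noncomputable def hermitePoly (j : ℕ) (x : ℝ) : ℝ :=
  (-1)^j * Real.exp (x^2) * iteratedDeriv j (fun t => Real.exp (-(t^2))) x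

/-- The Hermite function `ψ_j`. -/
noncomputable def psi (j : ℕ) (x : ℝ) : ℝ :=
  (-1)^j * (Real.sqrt (2^j * (Nat.factorial j : ℝ) * Real.sqrt Real.pi))⁻¹ *
    hermitePoly j x * Real.exp (-(x^2) / 2)

lemma hermitePoly_eq (j : ℕ) (x : ℝ) :
    hermitePoly j x
      = (Real.sqrt 2) ^ j * Polynomial.aeval (Real.sqrt 2 * x) (Polynomial.hermite j) := by
  have hs2 : (Real.sqrt 2) ^ 2 = 2 := Real.sq_sqrt (by norm_num)
  have hfun : (fun t : ℝ => Real.exp (-(t ^ 2)))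
      = fun t : ℝ => (fun y : ℝ => Real.exp (-(y ^ 2 / 2))) (Real.sqrt 2 * t) := by
    funext t
    simp only [mul_pow, hs2]
    ring_nf
  have hCD : ContDiff ℝ (j : ℕ∞) (fun y : ℝ => Real.exp (-(y ^ 2 / 2))) :=
    contDiff_g0.of_le le_top
  have h1 : iteratedDeriv j (fun t : ℝ => Real.exp (-(t ^ 2))) x
      = (Real.sqrt 2) ^ j
        * iteratedDeriv j (fun y : ℝ => Real.exp (-(y ^ 2 / 2))) (Real.sqrt 2 * x) := by
    rw [hfun]
    rw [iteratedDeriv_comp_const_mul (contDiff_g0.of_le le_top) (Real.sqrt 2)]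
  rw [hermitePoly, h1, iteratedDeriv_eq_iterate, deriv_iter_g0 j]
  beta_reduce
  have h2 : ((Real.sqrt 2 * x) ^ 2 / 2) = x ^ 2 := by
    rw [mul_pow, hs2]; ring
  rw [h2]
  have h3 : Real.exp (x ^ 2) * Real.exp (-(x ^ 2)) = 1 := by
    rw [← Real.exp_add]; simp
  have h4 : ((-1 : ℝ) ^ j) * ((-1 : ℝ) ^ j) = 1 := by
    rw [← pow_add]; simp [pow_mul]
  calc (-1 : ℝ) ^ j * Real.exp (x ^ 2)
        * ((Real.sqrt 2) ^ j * ((-1 : ℝ) ^ j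
            * Polynomial.aeval (Real.sqrt 2 * x) (Polynomial.hermite j)
            * Real.exp (-(x ^ 2))))
      = ((-1 : ℝ) ^ j * (-1 : ℝ) ^ j) * (Real.exp (x ^ 2) * Real.exp (-(x ^ 2)))
          * ((Real.sqrt 2) ^ j * Polynomial.aeval (Real.sqrt 2 * x) (Polynomial.hermite j)) := by
        ring
    _ = (Real.sqrt 2) ^ j * Polynomial.aeval (Real.sqrt 2 * x) (Polynomial.hermite j) := by
        rw [h4, h3]
        ring

lemma gauss_coeff (j : ℕ) (m : ℝ) :
    ∫ x : ℝ, gauss m x * psi j x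
      = (-1 : ℝ) ^ j * (Real.sqrt (2 ^ j * (Nat.factorial j : ℝ) * Real.sqrt π))⁻¹
        * (Real.sqrt 2)⁻¹ * m ^ j * Real.exp (-(m ^ 2) / 4) := by
  have hs2 : (Real.sqrt 2) ^ 2 = 2 := Real.sq_sqrt (by norm_num)
  have hs2ne : Real.sqrt 2 ≠ 0 := by positivity
  set N : ℝ := (Real.sqrt (2 ^ j * (Nat.factorial j : ℝ) * Real.sqrt π))⁻¹ with hN
  set c : ℝ := (Real.sqrt (2 * π))⁻¹ with hc
  set G : ℝ → ℝ := fun y =>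
    Polynomial.aeval y (Polynomial.hermite j) * Real.exp (-(y / Real.sqrt 2 - m / 2) ^ 2)
    with hG
  have key : ∀ x : ℝ, gauss m x * psi j x
      = ((-1 : ℝ) ^ j * c * N * Real.exp (-(m ^ 2) / 4) * (Real.sqrt 2) ^ j)
        * G (Real.sqrt 2 * x) := by
    intro x
    rw [gauss, psi, hermitePoly_eq, hG]
    have hx : Real.sqrt 2 * x / Real.sqrt 2 = x := by field_simp
    simp only [hx]
    have hexp : Real.exp (-(x - m) ^ 2 / 2) * Real.exp (-(x ^ 2) / 2)
        = Real.exp (-(m ^ 2) / 4) * Real.exp (-(x - m / 2) ^ 2) := by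
      rw [← Real.exp_add, ← Real.exp_add]
      ring_nf
    calc (Real.sqrt (2 * π))⁻¹ * Real.exp (-(x - m) ^ 2 / 2)
          * ((-1 : ℝ) ^ j * N
            * ((Real.sqrt 2) ^ j * Polynomial.aeval (Real.sqrt 2 * x) (Polynomial.hermite j))
            * Real.exp (-(x ^ 2) / 2))
        = ((-1 : ℝ) ^ j * c * N * (Real.sqrt 2) ^ j)
            * (Polynomial.aeval (Real.sqrt 2 * x) (Polynomial.hermite j)
              * (Real.exp (-(x - m) ^ 2 / 2) * Real.exp (-(x ^ 2) / 2))) := by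
          rw [hc]; ring
      _ = ((-1 : ℝ) ^ j * c * N * Real.exp (-(m ^ 2) / 4) * (Real.sqrt 2) ^ j)
            * (Polynomial.aeval (Real.sqrt 2 * x) (Polynomial.hermite j)
              * Real.exp (-(x - m / 2) ^ 2)) := by
          rw [hexp]; ring
  simp only [key]
  rw [MeasureTheory.integral_const_mul]
  rw [MeasureTheory.Measure.integral_comp_mul_left G (Real.sqrt 2)]
  have hGy : ∀ y : ℝ, G y
      = Polynomial.aeval y (Polynomial.hermite j)
        * Real.exp (-(y - m / Real.sqrt 2) ^ 2 / 2) := by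
    intro y
    have e1 : y / Real.sqrt 2 - m / 2 = (y - m / Real.sqrt 2) / Real.sqrt 2 := by
      field_simp
      linear_combination (-m) * hs2
    simp only [hG, e1, div_pow, hs2]
    ring_nf
  have hKint : (∫ y : ℝ, G y) = (m / Real.sqrt 2) ^ j * Real.sqrt (2 * π) := by
    rw [show (∫ y : ℝ, G y) = ∫ y : ℝ, Polynomial.aeval y (Polynomial.hermite j)
        * Real.exp (-(y - m / Real.sqrt 2) ^ 2 / 2) from by simp only [hGy]]
    exact K_lemma j (m / Real.sqrt 2)
  rw [hKint]
  have habs : |(Real.sqrt 2)⁻¹| = (Real.sqrt 2)⁻¹ := by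
    rw [abs_of_nonneg]; positivity
  rw [habs, smul_eq_mul]
  have hpow : (Real.sqrt 2) ^ j * (m / Real.sqrt 2) ^ j = m ^ j := by
    rw [← mul_pow]
    congr 1
    field_simp
  have hcs : c * Real.sqrt (2 * π) = 1 := by
    rw [hc, inv_mul_cancel₀]
    positivity
  calc (-1 : ℝ) ^ j * c * N * Real.exp (-(m ^ 2) / 4) * (Real.sqrt 2) ^ j
        * ((Real.sqrt 2)⁻¹ * ((m / Real.sqrt 2) ^ j * Real.sqrt (2 * π)))
      = ((-1 : ℝ) ^ j * N * (Real.sqrt 2)⁻¹ * Real.exp (-(m ^ 2) / 4))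
          * ((Real.sqrt 2) ^ j * (m / Real.sqrt 2) ^ j) * (c * Real.sqrt (2 * π)) := by
        ring
    _ = (-1 : ℝ) ^ j * N * (Real.sqrt 2)⁻¹ * m ^ j * Real.exp (-(m ^ 2) / 4) := by
        rw [hpow, hcs]; ring

lemma continuous_psi (j : ℕ) : Continuous (psi j) := by
  have hrw : psi j = fun x =>
      (-1 : ℝ) ^ j * (Real.sqrt (2 ^ j * (Nat.factorial j : ℝ) * Real.sqrt π))⁻¹
        * ((Real.sqrt 2) ^ j * Polynomial.aeval (Real.sqrt 2 * x) (Polynomial.hermite j))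
        * Real.exp (-(x ^ 2) / 2) := by
    funext x; rw [psi, hermitePoly_eq]
  rw [hrw]
  have h1 : Continuous fun x : ℝ => Polynomial.aeval (Real.sqrt 2 * x) (Polynomial.hermite j) :=
    (Polynomial.continuous_aeval (Polynomial.hermite j)).comp
      (continuous_const.mul continuous_id)
  have h2 : Continuous fun x : ℝ => Real.exp (-(x ^ 2) / 2) :=
    Real.continuous_exp.comp (((continuous_pow 2).neg).div_const 2)
  exact ((continuous_const.mul (continuous_const.mul h1)).mul h2)

lemma integrable_psi (j : ℕ) : Integrable (psi j) := by
  set P : ℝ[X] := ((Polynomial.hermite j).map (algebraMap ℤ ℝ)).comp (C (Real.sqrt 2) * X)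
    with hP
  have key : ∀ x : ℝ, psi j x
      = ((-1 : ℝ) ^ j * (Real.sqrt (2 ^ j * (Nat.factorial j : ℝ) * Real.sqrt π))⁻¹
          * (Real.sqrt 2) ^ j)
        * (Polynomial.aeval x P * Real.exp (-(1/2 : ℝ) * x ^ 2 + 0 * x + 0)) := by
    intro x
    rw [psi, hermitePoly_eq, hP, Polynomial.aeval_comp]
    simp only [map_mul, Polynomial.aeval_C, Polynomial.aeval_X,
      Polynomial.aeval_map_algebraMap]
    have : -(1/2 : ℝ) * x ^ 2 + 0 * x + 0 = -(x ^ 2) / 2 := by ring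
    rw [this]
    have : (algebraMap ℝ ℝ) (Real.sqrt 2) = Real.sqrt 2 := by simp
    rw [this]
    ring
  exact (((integrable_poly_mul_gauss' (by norm_num) P 0 0).const_mul _).congr
    (Filter.Eventually.of_forall fun x => (key x).symm))

lemma gauss_coeff_shift (j : ℕ) (r μ : ℝ) :
    ∫ x : ℝ, gauss μ x * psi j (x - r)
      = (-1 : ℝ) ^ j * (Real.sqrt (2 ^ j * (Nat.factorial j : ℝ) * Real.sqrt π))⁻¹
        * (Real.sqrt 2)⁻¹ * (μ - r) ^ j * Real.exp (-((μ - r) ^ 2) / 4) := by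
  have h1 : ∀ x : ℝ, gauss μ x * psi j (x - r)
      = (fun x => gauss (μ - r) x * psi j x) (x - r) := by
    intro x
    simp only [gauss]
    have : x - r - (μ - r) = x - μ := by ring
    rw [this]
  simp only [h1]
  rw [integral_sub_right_eq_self (fun x => gauss (μ - r) x * psi j x) r]
  exact gauss_coeff j (μ - r)

lemma sqrt_pow_eq (j : ℕ) : Real.sqrt (2 ^ j) = (Real.sqrt 2) ^ j := by
  have h : (2 : ℝ) ^ j = ((Real.sqrt 2) ^ j) ^ 2 := by
    rw [← pow_mul, mul_comm j 2, pow_mul, Real.sq_sqrt (by norm_num : (0:ℝ) ≤ 2)]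
  rw [h, Real.sqrt_sq (by positivity)]

lemma gauss_coeff_bound (j : ℕ) (r μ : ℝ) (h : μ ∈ Set.Icc (r - 1/2) (r + 1/2)) :
    |∫ x : ℝ, gauss μ x * psi j (x - r)|
      ≤ 1 / (Real.sqrt (Nat.factorial j : ℝ) * (2 * Real.sqrt 2) ^ j) := by
  rw [gauss_coeff_shift j r μ]
  set m := μ - r with hm
  have hmabs : |m| ≤ 1/2 := by
    rw [abs_le]
    obtain ⟨h1, h2⟩ := h
    constructor <;> [linarith; linarith]
  have hfac : (0:ℝ) < (Nat.factorial j : ℝ) := by exact_mod_cast Nat.factorial_pos j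
  have hsqrtN : Real.sqrt (2 ^ j * (Nat.factorial j : ℝ) * Real.sqrt π)
      = (Real.sqrt 2) ^ j * Real.sqrt (Nat.factorial j : ℝ) * Real.sqrt (Real.sqrt π) := by
    rw [Real.sqrt_mul (by positivity), Real.sqrt_mul (by positivity), sqrt_pow_eq]
  have habs : |(-1 : ℝ) ^ j * (Real.sqrt (2 ^ j * (Nat.factorial j : ℝ) * Real.sqrt π))⁻¹
        * (Real.sqrt 2)⁻¹ * m ^ j * Real.exp (-(m ^ 2) / 4)|
      = (Real.sqrt (2 ^ j * (Nat.factorial j : ℝ) * Real.sqrt π))⁻¹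
        * (Real.sqrt 2)⁻¹ * |m| ^ j * Real.exp (-(m ^ 2) / 4) := by
    rw [abs_mul, abs_mul, abs_mul, abs_mul, abs_pow, abs_pow, abs_neg, abs_one, one_pow,
      one_mul, abs_of_nonneg (by positivity : (0:ℝ) ≤ (Real.sqrt (2 ^ j
        * (Nat.factorial j : ℝ) * Real.sqrt π))⁻¹),
      abs_of_nonneg (by positivity : (0:ℝ) ≤ (Real.sqrt 2)⁻¹),
      abs_of_nonneg (Real.exp_nonneg _)]
  rw [habs, hsqrtN]
  have hexp1 : Real.exp (-(m ^ 2) / 4) ≤ 1 := by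
    rw [← Real.exp_zero]
    apply Real.exp_le_exp.2
    nlinarith [sq_nonneg m]
  have hmp : |m| ^ j ≤ (1/2 : ℝ) ^ j := pow_le_pow_left₀ (abs_nonneg m) hmabs j
  have hpi1 : (1:ℝ) ≤ Real.sqrt (Real.sqrt π) := by
    apply Real.one_le_sqrt.2
    apply Real.one_le_sqrt.2
    linarith [Real.pi_gt_three]
  have hs21 : (1:ℝ) ≤ Real.sqrt 2 := by
    rw [show (1:ℝ) = Real.sqrt 1 by simp]
    exact Real.sqrt_le_sqrt (by norm_num)
  set A := (Real.sqrt 2) ^ j * Real.sqrt (Nat.factorial j : ℝ) * Real.sqrt (Real.sqrt π)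
  have hApos : 0 < A := by
    apply mul_pos (mul_pos (by positivity) (Real.sqrt_pos.2 hfac))
    linarith
  have step1 : A⁻¹ * (Real.sqrt 2)⁻¹ * |m| ^ j * Real.exp (-(m ^ 2) / 4)
      ≤ A⁻¹ * (Real.sqrt 2)⁻¹ * (1/2 : ℝ) ^ j := by
    have h0 : (0:ℝ) ≤ A⁻¹ * (Real.sqrt 2)⁻¹ := by positivity
    calc A⁻¹ * (Real.sqrt 2)⁻¹ * |m| ^ j * Real.exp (-(m ^ 2) / 4)
        ≤ A⁻¹ * (Real.sqrt 2)⁻¹ * |m| ^ j * 1 := by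
          apply mul_le_mul_of_nonneg_left hexp1 (by positivity)
      _ = A⁻¹ * (Real.sqrt 2)⁻¹ * |m| ^ j := by ring
      _ ≤ A⁻¹ * (Real.sqrt 2)⁻¹ * (1/2 : ℝ) ^ j := mul_le_mul_of_nonneg_left hmp h0
  refine le_trans step1 ?_
  have hkey : A⁻¹ * (Real.sqrt 2)⁻¹ * (1/2 : ℝ) ^ j
      = (1 / (Real.sqrt (Nat.factorial j : ℝ) * (2 * Real.sqrt 2) ^ j))
        * (Real.sqrt (Real.sqrt π) * Real.sqrt 2)⁻¹ := by
    have hsf : (0:ℝ) < Real.sqrt (Nat.factorial j : ℝ) := Real.sqrt_pos.2 hfac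
    have hsp : (0:ℝ) < Real.sqrt (Real.sqrt π) := by linarith
    have hs2 : (0:ℝ) < Real.sqrt 2 := by linarith
    field_simp [A]
    have h2j : (1/2:ℝ)^j * 2^j = 1 := by rw [← mul_pow]; norm_num
    linear_combination (Real.sqrt 2 ^ j * Real.sqrt (Nat.factorial j : ℝ) * Real.sqrt (Real.sqrt π)) * h2j
  rw [hkey]
  have hge1 : (1:ℝ) ≤ Real.sqrt (Real.sqrt π) * Real.sqrt 2 :=
    one_le_mul_of_one_le_of_one_le hpi1 hs21
  have hCpos : (0:ℝ) ≤ 1 / (Real.sqrt (Nat.factorial j : ℝ) * (2 * Real.sqrt 2) ^ j) := by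
    positivity
  calc (1 / (Real.sqrt (Nat.factorial j : ℝ) * (2 * Real.sqrt 2) ^ j))
        * (Real.sqrt (Real.sqrt π) * Real.sqrt 2)⁻¹
      ≤ (1 / (Real.sqrt (Nat.factorial j : ℝ) * (2 * Real.sqrt 2) ^ j)) * 1 := by
        apply mul_le_mul_of_nonneg_left _ hCpos
        exact inv_le_one_of_one_le₀ hge1
    _ = 1 / (Real.sqrt (Nat.factorial j : ℝ) * (2 * Real.sqrt 2) ^ j) := mul_one _

theorem stmt8 (r : ℝ) (ν : Measure ℝ) [IsProbabilityMeasure ν]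
    (hsupp : ν (Set.Icc (r - 1/2) (r + 1/2))ᶜ = 0) (j : ℕ) :
    |∫ x, mix ν x * psi j (x - r)|
      ≤ 1 / (Real.sqrt (Nat.factorial j : ℝ) * (2 * Real.sqrt 2)^j) := by
  have hpsi_int : Integrable (fun x : ℝ => psi j (x - r)) := (integrable_psi j).comp_sub_right r
  have hprod : Integrable (Function.uncurry fun μ x => gauss μ x * psi j (x - r))
      (ν.prod volume) := by
    have hbound : Integrable (fun p : ℝ × ℝ =>
        (1 : ℝ) * ((Real.sqrt (2 * π))⁻¹ * |psi j (p.2 - r)|)) (ν.prod volume) :=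
      Integrable.mul_prod (integrable_const 1) ((hpsi_int.abs).const_mul _)
    have hmeas : AEStronglyMeasurable (Function.uncurry fun μ x => gauss μ x * psi j (x - r))
        (ν.prod volume) := by
      apply Continuous.aestronglyMeasurable
      have hg : Continuous fun p : ℝ × ℝ => gauss p.1 p.2 := by
        simp only [gauss]
        exact continuous_const.mul (Real.continuous_exp.comp
          ((((continuous_snd.sub continuous_fst).pow 2).neg).div_const 2))
      have hp : Continuous fun p : ℝ × ℝ => psi j (p.2 - r) :=
        (continuous_psi j).comp (continuous_snd.sub continuous_const)
      exact hg.mul hp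
    refine hbound.mono' hmeas (Filter.Eventually.of_forall fun p => ?_)
    simp only [Function.uncurry, one_mul, Real.norm_eq_abs]
    rw [abs_mul]
    apply mul_le_mul_of_nonneg_right _ (abs_nonneg _)
    rw [gauss, abs_mul, abs_of_nonneg (by positivity : (0:ℝ) ≤ (Real.sqrt (2 * π))⁻¹),
      abs_of_nonneg (Real.exp_nonneg _)]
    have : Real.exp (-(p.2 - p.1) ^ 2 / 2) ≤ 1 := by
      rw [← Real.exp_zero]
      apply Real.exp_le_exp.2
      nlinarith [sq_nonneg (p.2 - p.1)]
    nlinarith [Real.sqrt_nonneg (2 * π), inv_nonneg.2 (Real.sqrt_nonneg (2 * π))]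
  have swap := MeasureTheory.integral_integral_swap
    (f := fun μ x => gauss μ x * psi j (x - r)) hprod
  have hmix : ∀ x : ℝ, mix ν x * psi j (x - r) = ∫ μ, gauss μ x * psi j (x - r) ∂ν := by
    intro x
    rw [mix, ← MeasureTheory.integral_mul_const]
  have hrw : (∫ x, mix ν x * psi j (x - r))
      = ∫ μ, (∫ x, gauss μ x * psi j (x - r)) ∂ν := by
    simp only [hmix]
    rw [← swap]
  rw [hrw]
  have hae : ∀ᵐ μ ∂ν, μ ∈ Set.Icc (r - 1/2) (r + 1/2) := by
    rw [Filter.eventually_iff, MeasureTheory.mem_ae_iff]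
    simpa only [Set.setOf_mem_eq] using hsupp
  have hbdd : ∀ᵐ μ ∂ν, ‖∫ x, gauss μ x * psi j (x - r)‖
      ≤ 1 / (Real.sqrt (Nat.factorial j : ℝ) * (2 * Real.sqrt 2) ^ j) := by
    filter_upwards [hae] with μ hμ
    rw [Real.norm_eq_abs]
    exact gauss_coeff_bound j r μ hμ
  have := MeasureTheory.norm_integral_le_of_norm_le_const hbdd
  rw [Real.norm_eq_abs] at this
  simpa using this
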